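/- Let E : ℝ × ℝ → ℝ be twice continuously differentiable on a neighborhood of (x₀, L₀) with E(x₀, L₀) = 0, ∂E/∂L(x₀, L₀) = 0, ∂²E/∂L²(x₀, L₀) > 0, and ∂E/∂x(x₀, L₀) < 0, and let L₋ < L₊ be the two continuously differentiable root branches of E near L₀ defined for x ∈ (x₀, x₀ + δ). Let φ : ℝ → ℝ be differentiable at 0 with φ(0) = 1 and φ'(0) = 0. Then (1 − φ(L₊(x) − L₋(x))) · (L₊'(x) − L₋'(x)) → 0 as x → x₀⁺. (Raising the in-eclipse thrust floor to 1 as the eclipse arc length tends to zero, via any modification φ with φ(0) = 1 and φ'(0) = 0, removes the singularity in the averaged costate dynamics caused by vanishing eclipse arcs.) -/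

import Mathlib

open Filter Topology Set

private lemma mono_aux {u u' : ℝ → ℝ} {a b : ℝ} (hab : a ≤ b)
    (hu : ∀ t ∈ Set.Icc a b, HasDerivAt u (u' t) t)
    (hu' : ∀ t ∈ Set.Icc a b, 0 ≤ u' t) : u a ≤ u b := by
  have hcont : ContinuousOn u (Set.Icc a b) := fun t ht =>
    (hu t ht).continuousAt.continuousWithinAt
  have hmono := monotoneOn_of_deriv_nonneg (convex_Icc a b) hcont
    (fun t ht => by
      have ht' : t ∈ Set.Icc a b := by
        rw [interior_Icc] at ht; exact Ioo_subset_Icc_self ht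
      exact (hu t ht').differentiableAt.differentiableWithinAt)
    (fun t ht => by
      have ht' : t ∈ Set.Icc a b := by
        rw [interior_Icc] at ht; exact Ioo_subset_Icc_self ht
      rw [(hu t ht').deriv]; exact hu' t ht')
  exact hmono (Set.left_mem_Icc.2 hab) (Set.right_mem_Icc.2 hab) hab

private lemma key1d {g G G₂ : ℝ → ℝ} {a b q : ℝ} (hab : a < b) (hq : 0 < q)
    (hga : g a = 0) (hgb : g b = 0)
    (hg : ∀ t ∈ Set.Icc a b, HasDerivAt g (G t) t)
    (hG : ∀ t ∈ Set.Icc a b, HasDerivAt G (G₂ t) t)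
    (hG2l : ∀ t ∈ Set.Icc a b, q ≤ G₂ t)
    (hG2u : ∀ t ∈ Set.Icc a b, G₂ t ≤ 3 * q) :
    q * (b - a) / 4 ≤ G b ∧ G a ≤ -(q * (b - a) / 4) := by
  have hgcont : ContinuousOn g (Set.Icc a b) := fun t ht =>
    (hg t ht).continuousAt.continuousWithinAt
  have hGcont : ContinuousOn G (Set.Icc a b) := fun t ht =>
    (hG t ht).continuousAt.continuousWithinAt
  obtain ⟨c, hc, hGc⟩ := exists_hasDerivAt_eq_zero hab hgcont (hga.trans hgb.symm)
    (fun t ht => hg t (Ioo_subset_Icc_self ht))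
  have hcI : c ∈ Set.Icc a b := Ioo_subset_Icc_self hc
  -- monotonicity bounds on G
  have hGmono : ∀ s ∈ Set.Icc a b, ∀ t ∈ Set.Icc a b, s ≤ t →
      q * (t - s) ≤ G t - G s ∧ G t - G s ≤ 3 * q * (t - s) := by
    intro s hs t ht hst
    rcases eq_or_lt_of_le hst with rfl | h
    · simp
    · obtain ⟨ξ, hξ, hslope⟩ := exists_hasDerivAt_eq_slope G G₂ h
        (hGcont.mono (Icc_subset_Icc hs.1 ht.2))
        (fun y hy => hG y ⟨hs.1.trans hy.1.le, hy.2.le.trans ht.2⟩)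
      have hξI : ξ ∈ Set.Icc a b := ⟨hs.1.trans hξ.1.le, hξ.2.le.trans ht.2⟩
      have h1 := hG2l ξ hξI
      have h2 := hG2u ξ hξI
      have hts : (0:ℝ) < t - s := by linarith
      have heq : G t - G s = G₂ ξ * (t - s) := by
        field_simp at hslope; linarith [hslope]
      constructor
      · rw [heq]; nlinarith
      · rw [heq]; nlinarith
  -- lower bounds on -g c
  have hright : g c ≤ -(q / 2 * (b - c) ^ 2) := by
    have := mono_aux (u := fun t => g t - q / 2 * (t - c) ^ 2)
      (u' := fun t => G t - q * (t - c)) hc.2.le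
      (fun t ht => by
        have htI : t ∈ Set.Icc a b := ⟨hcI.1.trans ht.1, ht.2⟩
        have h1 : HasDerivAt (fun t => q / 2 * (t - c) ^ 2) (q / 2 * (2 * (t - c))) t := by
          have := (((hasDerivAt_id t).sub_const c).pow 2).const_mul (q / 2)
          simpa using this
        have := (hg t htI).sub h1
        exact this.congr_deriv (by beta_reduce; ring))
      (fun t ht => by
        have htI : t ∈ Set.Icc a b := ⟨hcI.1.trans ht.1, ht.2⟩
        have := (hGmono c hcI t htI ht.1).1
        rw [hGc] at this
        show 0 ≤ G t - q * (t - c)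
        linarith)
    simp only [sub_self] at this
    rw [hgb] at this
    nlinarith [this]
  have hleft : g c ≤ -(q / 2 * (c - a) ^ 2) := by
    have := mono_aux (u := fun t => -(g t - q / 2 * (t - c) ^ 2))
      (u' := fun t => -(G t - q * (t - c))) hc.1.le
      (fun t ht => by
        have htI : t ∈ Set.Icc a b := ⟨ht.1, ht.2.trans hcI.2⟩
        have h1 : HasDerivAt (fun t => q / 2 * (t - c) ^ 2) (q / 2 * (2 * (t - c))) t := by
          have := (((hasDerivAt_id t).sub_const c).pow 2).const_mul (q / 2)
          simpa using this
        have := ((hg t htI).sub h1).neg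
        exact this.congr_deriv (by beta_reduce; ring))
      (fun t ht => by
        have htI : t ∈ Set.Icc a b := ⟨ht.1, ht.2.trans hcI.2⟩
        have := (hGmono t htI c hcI ht.2).1
        rw [hGc] at this
        show 0 ≤ -(G t - q * (t - c))
        linarith)
    simp only [sub_self] at this
    rw [hga] at this
    nlinarith [this]
  -- upper bounds on -g c via MVT
  have hupl : -(g c) ≤ 3 * q * (c - a) ^ 2 := by
    obtain ⟨ξ, hξ, hslope⟩ := exists_hasDerivAt_eq_slope g G hc.1
      (hgcont.mono (Icc_subset_Icc le_rfl hcI.2))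
      (fun y hy => hg y ⟨hy.1.le, hy.2.le.trans hcI.2⟩)
    have hξI : ξ ∈ Set.Icc a b := ⟨hξ.1.le, hξ.2.le.trans hcI.2⟩
    have := (hGmono ξ hξI c hcI hξ.2.le).2
    rw [hGc] at this
    have hca : (0:ℝ) < c - a := by linarith [hc.1]
    have heq : g c - g a = G ξ * (c - a) := by
      field_simp at hslope; linarith [hslope]
    rw [hga] at heq
    have hh := mul_le_mul_of_nonneg_right this hca.le
    have hh2 : 0 ≤ 3 * q * (ξ - a) * (c - a) := by
      have : (0:ℝ) ≤ ξ - a := by linarith [hξ.1]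
      positivity
    nlinarith [hh, hh2]
  have hupr : -(g c) ≤ 3 * q * (b - c) ^ 2 := by
    obtain ⟨ξ, hξ, hslope⟩ := exists_hasDerivAt_eq_slope g G hc.2
      (hgcont.mono (Icc_subset_Icc hcI.1 le_rfl))
      (fun y hy => hg y ⟨hcI.1.trans hy.1.le, hy.2.le⟩)
    have hξI : ξ ∈ Set.Icc a b := ⟨hcI.1.trans hξ.1.le, hξ.2.le⟩
    have := (hGmono c hcI ξ hξI hξ.1.le).2
    rw [hGc] at this
    have hbc : (0:ℝ) < b - c := by linarith [hc.2]
    have heq : g b - g c = G ξ * (b - c) := by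
      field_simp at hslope; linarith [hslope]
    rw [hgb] at heq
    have hh := mul_le_mul_of_nonneg_right this hbc.le
    have hh2 : 0 ≤ 3 * q * (b - ξ) * (b - c) := by
      have : (0:ℝ) ≤ b - ξ := by linarith [hξ.2]
      positivity
    nlinarith [hh, hh2]
  -- comparability
  have hbc : (0:ℝ) < b - c := by linarith [hc.2]
  have hca : (0:ℝ) < c - a := by linarith [hc.1]
  have hsq1 : (b - c) ^ 2 ≤ 6 * (c - a) ^ 2 := by nlinarith [hright, hupl, hq]
  have hsq2 : (c - a) ^ 2 ≤ 6 * (b - c) ^ 2 := by nlinarith [hleft, hupr, hq]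
  have h1 : b - c ≤ 3 * (c - a) := by nlinarith [hsq1, hbc, hca, mul_pos hbc hca, sq_nonneg (c - a)]
  have h2 : c - a ≤ 3 * (b - c) := by nlinarith [hsq2, hbc, hca, mul_pos hbc hca, sq_nonneg (b - c)]
  constructor
  · have := (hGmono c hcI b (Set.right_mem_Icc.2 hab.le) hc.2.le).1
    rw [hGc] at this; nlinarith
  · have := (hGmono a (Set.left_mem_Icc.2 hab.le) c hcI hc.1.le).1
    rw [hGc] at this; nlinarith

set_option maxHeartbeats 1000000 in
/-- With the vanishing-eclipse-arc setting of the previous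
statement (C² eclipsing function `E` with degenerate root at `(x₀, L₀)` and C¹
root branches `L₋ < L₊` merging at `L₀` with derivatives blowing up to `∓∞`),
any thrust-floor modification `φ` that is differentiable at `0` with `φ(0) = 1`
and `φ'(0) = 0` removes the singularity:
`(1 - φ(L₊ - L₋)) · (L₊' - L₋') → 0` as `x → x₀⁺`. -/
theorem thrust_floor_modification_removes_singularity
    (E : ℝ × ℝ → ℝ) (x₀ L₀ δ : ℝ) (hδ : 0 < δ) (Lm Lp : ℝ → ℝ)
    (hC2 : ∃ U ∈ 𝓝 (x₀, L₀), ContDiffOn ℝ 2 E U)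
    (h0 : E (x₀, L₀) = 0)
    (hEL : deriv (fun L => E (x₀, L)) L₀ = 0)
    (hELL : 0 < deriv (deriv (fun L => E (x₀, L))) L₀)
    (hEx : deriv (fun x => E (x, L₀)) x₀ < 0)
    (hroots : ∀ x ∈ Set.Ioo x₀ (x₀ + δ),
      E (x, Lm x) = 0 ∧ E (x, Lp x) = 0 ∧ Lm x < Lp x)
    (hLmC1 : ContDiffOn ℝ 1 Lm (Set.Ioo x₀ (x₀ + δ)))
    (hLpC1 : ContDiffOn ℝ 1 Lp (Set.Ioo x₀ (x₀ + δ)))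
    (hLm : Tendsto Lm (𝓝[>] x₀) (𝓝 L₀))
    (hLp : Tendsto Lp (𝓝[>] x₀) (𝓝 L₀))
    (hLp' : Tendsto (deriv Lp) (𝓝[>] x₀) atTop)
    (hLm' : Tendsto (deriv Lm) (𝓝[>] x₀) atBot)
    (φ : ℝ → ℝ) (hφdiff : DifferentiableAt ℝ φ 0)
    (hφ0 : φ 0 = 1) (hφ' : deriv φ 0 = 0) :
    Tendsto (fun x => (1 - φ (Lp x - Lm x)) * (deriv Lp x - deriv Lm x))
      (𝓝[>] x₀) (𝓝 0) := by
  obtain ⟨U, hU, hEC2⟩ := hC2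
  obtain ⟨V, hVU, hVopen, hz₀V⟩ := mem_nhds_iff.mp hU
  have hEV : ContDiffOn ℝ 2 E V := hEC2.mono hVU
  -- second-order partial data
  have hfdC1 : ContDiffOn ℝ 1 (fderiv ℝ E) V :=
    hEV.fderiv_of_isOpen hVopen (by norm_num)
  have hE₂C1 : ContDiffOn ℝ 1 (fun z => fderiv ℝ E z (0, 1)) V :=
    (ContinuousLinearMap.apply ℝ ℝ ((0, 1) : ℝ × ℝ)).contDiff.comp_contDiffOn hfdC1
  have hEdiff : ∀ z ∈ V, HasFDerivAt E (fderiv ℝ E z) z := fun z hz =>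
    ((hEV.contDiffAt (hVopen.mem_nhds hz)).differentiableAt (by norm_num)).hasFDerivAt
  have hE₂diff : ∀ z ∈ V, HasFDerivAt (fun z => fderiv ℝ E z (0, 1))
      (fderiv ℝ (fun z => fderiv ℝ E z (0, 1)) z) z := fun z hz =>
    ((hE₂C1.contDiffAt (hVopen.mem_nhds hz)).differentiableAt one_ne_zero).hasFDerivAt
  -- partial derivatives in L
  have hEL2 : ∀ x L, (x, L) ∈ V →
      HasDerivAt (fun L' => E (x, L')) (fderiv ℝ E (x, L) (0, 1)) L := by
    intro x L hz
    have h1 : HasDerivAt (fun L' : ℝ => ((x, L') : ℝ × ℝ)) ((0 : ℝ), (1 : ℝ)) L :=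
      (hasDerivAt_const _ _).prodMk (hasDerivAt_id _)
    exact (hEdiff (x, L) hz).comp_hasDerivAt L h1
  have hE₂L : ∀ x L, (x, L) ∈ V →
      HasDerivAt (fun L' => fderiv ℝ E (x, L') (0, 1))
        (fderiv ℝ (fun z => fderiv ℝ E z (0, 1)) (x, L) (0, 1)) L := by
    intro x L hz
    have h1 : HasDerivAt (fun L' : ℝ => ((x, L') : ℝ × ℝ)) ((0 : ℝ), (1 : ℝ)) L :=
      (hasDerivAt_const _ _).prodMk (hasDerivAt_id _)
    exact (hE₂diff (x, L) hz).comp_hasDerivAt L h1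
  -- partial derivative in x at the base point
  have hExd : HasDerivAt (fun x => E (x, L₀)) (fderiv ℝ E (x₀, L₀) (1, 0)) x₀ := by
    have h1 : HasDerivAt (fun x : ℝ => ((x, L₀) : ℝ × ℝ)) ((1 : ℝ), (0 : ℝ)) x₀ :=
      (hasDerivAt_id _).prodMk (hasDerivAt_const _ _)
    exact (hEdiff (x₀, L₀) hz₀V).comp_hasDerivAt x₀ h1
  -- translate the hypotheses
  have hp : fderiv ℝ E (x₀, L₀) (1, 0) < 0 := by rwa [hExd.deriv] at hEx
  have hq : 0 < fderiv ℝ (fun z => fderiv ℝ E z (0, 1)) (x₀, L₀) (0, 1) := by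
    have hVnhds : ∀ᶠ L in 𝓝 L₀, (x₀, L) ∈ V := by
      have hc : Continuous (fun L : ℝ => ((x₀, L) : ℝ × ℝ)) := by fun_prop
      exact hc.continuousAt.eventually_mem (hVopen.mem_nhds hz₀V)
    have heq : deriv (fun L => E (x₀, L)) =ᶠ[𝓝 L₀] fun L => fderiv ℝ E (x₀, L) (0, 1) := by
      filter_upwards [hVnhds] with L hL using (hEL2 x₀ L hL).deriv
    rw [heq.deriv_eq, (hE₂L x₀ L₀ hz₀V).deriv] at hELL
    exact hELL
  set q : ℝ := fderiv ℝ (fun z => fderiv ℝ E z (0, 1)) (x₀, L₀) (0, 1) with hqdef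
  set M : ℝ := |fderiv ℝ E (x₀, L₀) (1, 0)| + 1 with hMdef
  have hM : 0 < M := by positivity
  -- continuity of coefficients, choice of a good ball
  have hE₁cont : ContinuousAt (fun z => fderiv ℝ E z (1, 0)) (x₀, L₀) := by
    have h := hEV.continuousOn_fderiv_of_isOpen hVopen (by norm_num)
    exact ((ContinuousLinearMap.apply ℝ ℝ ((1, 0) : ℝ × ℝ)).continuous.comp_continuousOn
      h).continuousAt (hVopen.mem_nhds hz₀V)
  have hE₂₂cont : ContinuousAt (fun z => fderiv ℝ (fun z => fderiv ℝ E z (0, 1)) z (0, 1))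
      (x₀, L₀) := by
    have h := hE₂C1.continuousOn_fderiv_of_isOpen hVopen le_rfl
    exact ((ContinuousLinearMap.apply ℝ ℝ ((0, 1) : ℝ × ℝ)).continuous.comp_continuousOn
      h).continuousAt (hVopen.mem_nhds hz₀V)
  have hball : ∀ᶠ z in 𝓝 (x₀, L₀), z ∈ V ∧
      q / 2 ≤ fderiv ℝ (fun z => fderiv ℝ E z (0, 1)) z (0, 1) ∧
      fderiv ℝ (fun z => fderiv ℝ E z (0, 1)) z (0, 1) ≤ 3 * (q / 2) ∧
      |fderiv ℝ E z (1, 0)| ≤ M := by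
    have h1 : ∀ᶠ z in 𝓝 (x₀, L₀),
        fderiv ℝ (fun z => fderiv ℝ E z (0, 1)) z (0, 1) ∈ Set.Ioo (q / 2) (3 * (q / 2)) :=
      hE₂₂cont.eventually_mem (isOpen_Ioo.mem_nhds (by constructor <;> linarith))
    have h2 : ∀ᶠ z in 𝓝 (x₀, L₀),
        fderiv ℝ E z (1, 0) ∈ Metric.ball (fderiv ℝ E (x₀, L₀) (1, 0)) 1 :=
      hE₁cont.eventually_mem (Metric.ball_mem_nhds _ one_pos)
    have h3 : ∀ᶠ z in 𝓝 (x₀, L₀), z ∈ V := by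
      filter_upwards [hVopen.mem_nhds hz₀V] with z hz using hz
    filter_upwards [h1, h2, h3] with z hz1 hz2 hz3
    refine ⟨hz3, hz1.1.le, hz1.2.le, ?_⟩
    rw [Metric.mem_ball, Real.dist_eq] at hz2
    rw [hMdef]
    have := abs_sub_abs_le_abs_sub (fderiv ℝ E z (1, 0)) (fderiv ℝ E (x₀, L₀) (1, 0))
    linarith
  obtain ⟨r, hr, hrball⟩ := Metric.eventually_nhds_iff_ball.mp hball
  -- the eventual bound on Δ·Δ'
  have hIoo : ∀ᶠ x in 𝓝[>] x₀, x ∈ Set.Ioo x₀ (x₀ + δ) :=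
    Ioo_mem_nhdsGT (by linarith)
  have hxr : ∀ᶠ x in 𝓝[>] x₀, dist x x₀ < r :=
    Eventually.filter_mono nhdsWithin_le_nhds
      (by filter_upwards [Metric.ball_mem_nhds x₀ hr] with y hy using Metric.mem_ball.mp hy)
  have hLmr : ∀ᶠ x in 𝓝[>] x₀, dist (Lm x) L₀ < r :=
    hLm (by filter_upwards [Metric.ball_mem_nhds L₀ hr] with y hy using Metric.mem_ball.mp hy)
  have hLpr : ∀ᶠ x in 𝓝[>] x₀, dist (Lp x) L₀ < r :=
    hLp (by filter_upwards [Metric.ball_mem_nhds L₀ hr] with y hy using Metric.mem_ball.mp hy)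
  have hLp'pos : ∀ᶠ x in 𝓝[>] x₀, 0 < deriv Lp x := hLp'.eventually_gt_atTop 0
  have hLm'neg : ∀ᶠ x in 𝓝[>] x₀, deriv Lm x < 0 := hLm'.eventually_lt_atBot 0
  have hbound : ∀ᶠ x in 𝓝[>] x₀,
      0 ≤ (Lp x - Lm x) * (deriv Lp x - deriv Lm x) ∧
      (Lp x - Lm x) * (deriv Lp x - deriv Lm x) ≤ 32 * M / q := by
    filter_upwards [hIoo, hxr, hLmr, hLpr, hLp'pos, hLm'neg]
      with x hx hxr hLmr hLpr hp' hm'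
    obtain ⟨hEa, hEb, hab⟩ := hroots x hx
    set a := Lm x
    set b := Lp x
    -- the whole segment lies in the good ball
    have hseg : ∀ L ∈ Set.Icc a b, ((x, L) : ℝ × ℝ) ∈ Metric.ball ((x₀, L₀) : ℝ × ℝ) r := by
      intro L hL
      rw [Metric.mem_ball, Prod.dist_eq]
      rw [Real.dist_eq] at hLmr hLpr ⊢
      refine max_lt hxr (abs_lt.2 ⟨?_, ?_⟩)
      · have := (abs_lt.1 hLmr).1; linarith [hL.1]
      · have := (abs_lt.1 hLpr).2; linarith [hL.2]
    -- key 1D estimate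
    have hkey := key1d (g := fun L => E (x, L)) (G := fun L => fderiv ℝ E (x, L) (0, 1))
      (G₂ := fun L => fderiv ℝ (fun z => fderiv ℝ E z (0, 1)) (x, L) (0, 1))
      (q := q / 2) hab (by linarith) hEa hEb
      (fun L hL => hEL2 x L (hrball _ (hseg L hL)).1)
      (fun L hL => hE₂L x L (hrball _ (hseg L hL)).1)
      (fun L hL => (hrball _ (hseg L hL)).2.1)
      (fun L hL => (hrball _ (hseg L hL)).2.2.1)
    have hGb : q * (b - a) / 8 ≤ fderiv ℝ E (x, b) (0, 1) := by
      have := hkey.1; linarith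
    have hGa : fderiv ℝ E (x, a) (0, 1) ≤ -(q * (b - a) / 8) := by
      have := hkey.2; linarith
    -- chain rule along the two branches
    have hchain : ∀ (Lf : ℝ → ℝ), ContDiffOn ℝ 1 Lf (Set.Ioo x₀ (x₀ + δ)) →
        (x, Lf x) ∈ V → (∀ y ∈ Set.Ioo x₀ (x₀ + δ), E (y, Lf y) = 0) →
        fderiv ℝ E (x, Lf x) (1, 0) + deriv Lf x * fderiv ℝ E (x, Lf x) (0, 1) = 0 := by
      intro Lf hLfC1 hmem hzero
      have hLfd : HasDerivAt Lf (deriv Lf x) x :=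
        (((hLfC1.differentiableOn one_ne_zero).differentiableAt
          (isOpen_Ioo.mem_nhds hx))).hasDerivAt
      have hcurve : HasDerivAt (fun y => ((y, Lf y) : ℝ × ℝ)) ((1 : ℝ), deriv Lf x) x :=
        (hasDerivAt_id x).prodMk hLfd
      have hcomp := (hEdiff _ hmem).comp_hasDerivAt x hcurve
      have hval : fderiv ℝ E (x, Lf x) (1, deriv Lf x) =
          fderiv ℝ E (x, Lf x) (1, 0) + deriv Lf x * fderiv ℝ E (x, Lf x) (0, 1) := by
        rw [show ((1 : ℝ), deriv Lf x) = (1, 0) + deriv Lf x • ((0 : ℝ), (1 : ℝ)) by simp,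
          map_add, map_smul]
        simp
      rw [hval] at hcomp
      have hev : (fun y => E (y, Lf y)) =ᶠ[𝓝 x] fun _ => 0 := by
        filter_upwards [isOpen_Ioo.mem_nhds hx] with y hy using hzero y hy
      have hd1 := hcomp.deriv
      have hd2 : deriv (E ∘ fun y => (y, Lf y)) x = 0 := by
        have hcongr : (E ∘ fun y => (y, Lf y)) =ᶠ[𝓝 x] fun _ => (0:ℝ) := hev
        rw [hcongr.deriv_eq, deriv_const]
      rw [hd2] at hd1
      linarith [hd1]
    have hmema : ((x, a) : ℝ × ℝ) ∈ V :=
      (hrball _ (hseg a ⟨le_refl a, hab.le⟩)).1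
    have hmemb : ((x, b) : ℝ × ℝ) ∈ V :=
      (hrball _ (hseg b ⟨hab.le, le_refl b⟩)).1
    have hchp := hchain Lp hLpC1 hmemb (fun y hy => (hroots y hy).2.1)
    have hchm := hchain Lm hLmC1 hmema (fun y hy => (hroots y hy).1)
    have hE₁b : |fderiv ℝ E (x, b) (1, 0)| ≤ M := (hrball _ (hseg b ⟨hab.le, le_refl b⟩)).2.2.2
    have hE₁a : |fderiv ℝ E (x, a) (1, 0)| ≤ M := (hrball _ (hseg a ⟨le_refl a, hab.le⟩)).2.2.2
    have hΔpos : (0:ℝ) < b - a := by linarith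
    constructor
    · exact mul_nonneg hΔpos.le (by linarith)
    · -- (b-a) * Lp' ≤ 16 M / q  and  -(b-a) * Lm' ≤ 16 M / q
      have h1 : (b - a) * deriv Lp x * q ≤ 16 * M := by
        have habs := (abs_le.1 hE₁b).1
        nlinarith [mul_le_mul_of_nonneg_left hGb hp'.le]
      have h2 : -((b - a) * deriv Lm x) * q ≤ 16 * M := by
        have habs := (abs_le.1 hE₁a).1
        nlinarith [mul_le_mul_of_nonneg_left hGa (by linarith : (0:ℝ) ≤ -(deriv Lm x))]
      rw [le_div_iff₀ hq]
      linarith only [h1, h2]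
  -- the difference quotient factor tends to 0
  have hψ : Tendsto (fun t => (1 - φ t) / t) (𝓝[≠] (0:ℝ)) (𝓝 0) := by
    have h := hφdiff.hasDerivAt
    rw [hφ'] at h
    rw [hasDerivAt_iff_tendsto_slope] at h
    have heq : (fun t => -(slope φ 0 t)) =ᶠ[𝓝[≠] (0:ℝ)] fun t => (1 - φ t) / t := by
      filter_upwards [self_mem_nhdsWithin] with t ht
      rw [slope_def_field, hφ0, sub_zero]
      ring
    exact Tendsto.congr' heq (by simpa using h.neg)
  have hΔ : Tendsto (fun x => Lp x - Lm x) (𝓝[>] x₀) (𝓝[≠] (0:ℝ)) := by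
    rw [tendsto_nhdsWithin_iff]
    constructor
    · simpa using hLp.sub hLm
    · filter_upwards [hIoo] with x hx
      exact Set.mem_compl_singleton_iff.mpr (ne_of_gt (sub_pos.2 (hroots x hx).2.2))
  have hfac1 : Tendsto (fun x => (1 - φ (Lp x - Lm x)) / (Lp x - Lm x)) (𝓝[>] x₀) (𝓝 0) :=
    hψ.comp hΔ
  have hbdd : IsBoundedUnder (· ≤ ·) (𝓝[>] x₀)
      (fun x => ‖(Lp x - Lm x) * (deriv Lp x - deriv Lm x)‖) := by
    refine ⟨32 * M / q, ?_⟩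
    rw [eventually_map]
    filter_upwards [hbound] with x hx
    rw [Real.norm_eq_abs, abs_of_nonneg hx.1]
    exact hx.2
  have hmain := hfac1.zero_mul_isBoundedUnder_le hbdd
  refine Tendsto.congr' ?_ hmain
  filter_upwards [hIoo] with x hx
  have hΔne : Lp x - Lm x ≠ 0 := ne_of_gt (sub_pos.2 (hroots x hx).2.2)
  field_simp
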